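/- Let c ≥ 1 and d ≥ 0 be integers and let w = w_1 τ_{i_1} w_2 τ_{i_2} ⋯ w_m τ_{i_m} ∈ 𝓛_std^(m) be any standard word (each w_j a standard simple word). Then the preimage under the bijection μ of the set of monomials of the OI-submodule generated by μ(w) is μ^{−1}(Mon(⟨μ(w)⟩)) = 𝓛̄_{i_1} 𝓝_{w_1} τ_{i_1} 𝓛̄_{i_2} 𝓝_{w_2} τ_{i_2} ⋯ 𝓛̄_{i_m} 𝓝_{w_m} τ_{i_m} 𝓛̄_0 ∩ 𝓛_std, where 𝓝_{w_j} is the set of simple words v such that the monomial η_1(v) is divisible by η_1(w_j). -/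

import Mathlib

noncomputable section
open scoped Computability

/-- The alphabet `Σ = {ξ_1,…,ξ_c, τ_0,…,τ_d}`. -/
inductive Letter (c d : ℕ) : Type
  | xi : Fin c → Letter c d
  | tau : Fin (d + 1) → Letter c d
deriving DecidableEq

/-- A word is *standard* if in every occurrence of two consecutive ξ-letters
`ξ_i ξ_j` one has `i ≤ j`. -/
def Standard {c d : ℕ} : List (Letter c d) → Prop :=
  List.Chain' fun a b => ∀ i j : Fin c, a = Letter.xi i → b = Letter.xi j → (i : ℕ) ≤ (j : ℕ)

/-- A *simple* word contains no τ-letters. -/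
def SimpleWord {c d : ℕ} (w : List (Letter c d)) : Prop :=
  ∀ a ∈ w, ∃ i, a = Letter.xi i

/-- Test for τ-letters. -/
def isTau {c d : ℕ} : Letter c d → Bool
  | Letter.tau _ => true
  | Letter.xi _ => false

/-- The number of τ-letters occurring in a word. -/
def tauCount {c d : ℕ} (w : List (Letter c d)) : ℕ := (w.filter isTau).length

/-- The language of one-letter words with letter drawn from `S`. -/
def letterLang {c d : ℕ} (S : Set (Letter c d)) : Language (Letter c d) :=
  {w | ∃ a ∈ S, w = [a]}

/-- The set of ξ-letters. -/
def xiSet (c d : ℕ) : Set (Letter c d) := Set.range Letter.xi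

/-- The language `𝓛_j = {ξ_1,…,ξ_c, τ_j}*`. -/
def LL (c d : ℕ) (j : Fin (d + 1)) : Language (Letter c d) :=
  (letterLang (xiSet c d ∪ {Letter.tau j}))∗

/-- The language `𝓛̄_j = ({ξ_1,…,ξ_c}* τ_j)*`. -/
def LLbar (c d : ℕ) (j : Fin (d + 1)) : Language (Letter c d) :=
  ((letterLang (xiSet c d))∗ * ({[Letter.tau j]} : Language (Letter c d)))∗

/-- The language `𝓛 = 𝓛_1 τ_1 𝓛_2 τ_2 ⋯ 𝓛_d τ_d 𝓛̄_0`. -/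
def LFull (c d : ℕ) : Language (Letter c d) :=
  (((List.finRange d).map fun j : Fin d =>
      LL c d j.succ * ({[Letter.tau j.succ]} : Language (Letter c d))).prod) * LLbar c d 0

/-- The language `𝓛_std` of standard words of `𝓛`. -/
def LStd (c d : ℕ) : Language (Letter c d) :=
  {w | w ∈ LFull c d ∧ Standard w}

/-- Monomials of `P = (X^{OI,1})^{⊗c}` (of arbitrary width), encoded by their exponent
vectors: `u (i, l)` is the exponent of the variable `x_{i,l+1}`. -/
abbrev MonP (c : ℕ) : Type := (Fin c × ℕ) →₀ ℕ

/-- Shift all variables one column to the right: `x_{k,l} ↦ x_{k,l+1}`. -/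
def shiftMon {c : ℕ} (u : MonP c) : MonP c :=
  Finsupp.mapDomain (fun v : Fin c × ℕ => (v.1, v.2 + 1)) u

/-- The shifting operator `T_i`: on the monomial it sends `x_{k,l} ↦ x_{k,l+1}`
(multiplicatively), and on a tuple `(p_1,…,p_d)` it adds `1` to `p_j` for `j ≥ i`
(1-based `j`), while `T_0` leaves the tuple unchanged. -/
def TOp {c d : ℕ} (i : Fin (d + 1)) (q : MonP c × (Fin d → ℕ)) : MonP c × (Fin d → ℕ) :=
  (shiftMon q.1,
    fun k => if 1 ≤ (i : ℕ) ∧ (i : ℕ) ≤ (k : ℕ) + 1 then q.2 k + 1 else q.2 k)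

/-- The map `η : Σ* → Mon(P) × ℕ^d`:  `η(e) = (1,(0,…,0))`, `η(ξ_i w) = x_{i,1}·η(w)`,
`η(τ_i w) = T_i(η(w))`. -/
def eta {c d : ℕ} : List (Letter c d) → MonP c × (Fin d → ℕ)
  | [] => (0, fun _ => 0)
  | Letter.xi i :: w => (Finsupp.single ((i : Fin c), (0 : ℕ)) 1 + (eta w).1, (eta w).2)
  | Letter.tau i :: w => TOp i (eta w)


/-- OI-divisibility of monomials of the free OI-module `F^{OI,d}`:
the monomial `x^b e_ρ ∈ F_n` (encoded `(b, ρ)` with 1-based tuple `ρ`) lies in the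
OI-submodule generated by `x^a e_π ∈ F_{m₀}` iff there is an order-preserving injection
`ε : [m₀] → [n]` (encoded as a strictly increasing `e : Fin m₀ → ℕ` with values in
`{1,…,n}`) such that `ρ = ε ∘ π` and the column-`i` exponents satisfy `a_i ≤ b_{ε(i)}`
componentwise. -/
def OIDiv {c d : ℕ} (m₀ n : ℕ) (a : MonP c × (Fin d → ℕ))
    (b : MonP c × (Fin d → ℕ)) : Prop :=
  ∃ e : Fin m₀ → ℕ, StrictMono e ∧ (∀ k, 1 ≤ e k ∧ e k ≤ n) ∧
    (∀ k : Fin d, ∃ k' : Fin m₀, ((k' : ℕ) + 1 = a.2 k ∧ b.2 k = e k')) ∧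
    (∀ (i : Fin c) (l : Fin m₀), a.1 (i, (l : ℕ)) ≤ b.1 (i, e l - 1))

/-- The language `𝓝_{w_j}` of simple words `v` such that the monomial `η₁(v)` is
divisible by `η₁(w_j)`. -/
def NW {c d : ℕ} (wj : List (Letter c d)) : Language (Letter c d) :=
  {v | SimpleWord v ∧ ∀ pt, (eta wj).1 pt ≤ (eta v).1 pt}

namespace OIAux
variable {c d : ℕ}

lemma shiftMon_apply_succ (u : MonP c) (i : Fin c) (t : ℕ) :
    shiftMon u (i, t + 1) = u (i, t) := by
  have hinj : Function.Injective (fun v : Fin c × ℕ => (v.1, v.2 + 1)) := by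
    intro a b h
    simp only [Prod.mk.injEq] at h
    exact Prod.ext h.1 (Nat.succ_injective h.2)
  exact Finsupp.mapDomain_apply hinj u (i, t)

lemma shiftMon_apply_zero (u : MonP c) (i : Fin c) :
    shiftMon u (i, 0) = 0 := by
  apply Finsupp.mapDomain_notin_range
  rintro ⟨⟨a, b⟩, h⟩
  simp [Prod.ext_iff] at h

lemma eta_append_simple {u v : List (Letter c d)} (hu : SimpleWord u) :
    eta (u ++ v) = ((eta u).1 + (eta v).1, (eta v).2) := by
  induction u with
  | nil => simp [eta]
  | cons a u ih =>
    obtain ⟨i, rfl⟩ := hu a (List.mem_cons_self)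
    have hu' : SimpleWord u := fun b hb => hu b (List.mem_cons_of_mem _ hb)
    rw [List.cons_append]
    show (_ + (eta (u ++ v)).1, (eta (u ++ v)).2) = _
    rw [ih hu']
    show _ = ((_ + (eta u).1 : MonP c) + (eta v).1, (eta v).2)
    rw [add_assoc]

lemma eta_simple_snd {u : List (Letter c d)} (hu : SimpleWord u) (k : Fin d) :
    (eta u).2 k = 0 := by
  induction u with
  | nil => simp [eta]
  | cons a u ih =>
    obtain ⟨i', rfl⟩ := hu a (List.mem_cons_self)
    have hu' : SimpleWord u := fun b hb => hu b (List.mem_cons_of_mem _ hb)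
    simpa [eta] using ih hu'

lemma eta_simple_high {u : List (Letter c d)} (hu : SimpleWord u) (i : Fin c) (t : ℕ) :
    (eta u).1 (i, t + 1) = 0 := by
  induction u with
  | nil => simp [eta]
  | cons a u ih =>
    obtain ⟨i', rfl⟩ := hu a (List.mem_cons_self)
    have hu' : SimpleWord u := fun b hb => hu b (List.mem_cons_of_mem _ hb)
    simp [eta, Finsupp.single_apply, ih hu']


abbrev Blk (c d : ℕ) := List (Letter c d) × Fin (d + 1)

def asm (bs : List (Blk c d)) : List (Letter c d) :=
  (bs.map fun b => b.1 ++ [Letter.tau b.2]).flatten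

def Simp (bs : List (Blk c d)) : Prop := ∀ b ∈ bs, SimpleWord b.1

@[simp] lemma asm_nil : asm ([] : List (Blk c d)) = [] := rfl

lemma asm_cons (b : Blk c d) (bs : List (Blk c d)) :
    asm (b :: bs) = b.1 ++ Letter.tau b.2 :: asm bs := by
  simp [asm]

lemma asm_append (bs bs' : List (Blk c d)) :
    asm (bs ++ bs') = asm bs ++ asm bs' := by
  simp [asm]

def seg (bs : List (Blk c d)) (t : ℕ) : List (Letter c d) := (bs.getD t ([], 0)).1

/-- A convenient count. -/
def cnt {d : ℕ} (K : ℕ) (js : List (Fin (d + 1))) : ℕ :=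
  js.countP (fun j : Fin (d + 1) => decide (1 ≤ (j : ℕ) ∧ (j : ℕ) ≤ K))

lemma eta_asm_fst {bs : List (Blk c d)} (hs : Simp bs) (i : Fin c) (t : ℕ) :
    (eta (asm bs)).1 (i, t) = (eta (seg bs t)).1 (i, 0) := by
  induction bs generalizing t with
  | nil => simp [seg, eta]
  | cons b bs ih =>
    have hb : SimpleWord b.1 := hs b (List.mem_cons_self)
    have hs' : Simp bs := fun x hx => hs x (List.mem_cons_of_mem _ hx)
    rw [asm_cons, eta_append_simple hb]
    show (eta b.1).1 (i, t) + (TOp b.2 (eta (asm bs))).1 (i, t) = _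
    cases t with
    | zero =>
      simp [TOp, shiftMon_apply_zero, seg]
    | succ t =>
      rw [eta_simple_high hb]
      simp only [TOp, shiftMon_apply_succ, zero_add]
      rw [ih hs']
      simp [seg]

lemma eta_asm_snd {bs : List (Blk c d)} (hs : Simp bs) (k : Fin d) :
    (eta (asm bs)).2 k = cnt ((k : ℕ) + 1) (bs.map Prod.snd) := by
  induction bs with
  | nil => simp [eta, cnt]
  | cons b bs ih =>
    have hb : SimpleWord b.1 := hs b (List.mem_cons_self)
    have hs' : Simp bs := fun x hx => hs x (List.mem_cons_of_mem _ hx)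
    rw [asm_cons, eta_append_simple hb]
    show (TOp b.2 (eta (asm bs))).2 k = _
    simp only [TOp, ih hs', cnt, List.map_cons, List.countP_cons]
    by_cases h : 1 ≤ (b.2 : ℕ) ∧ (b.2 : ℕ) ≤ (k : ℕ) + 1 <;> simp [h]

lemma tauCount_append (u v : List (Letter c d)) :
    tauCount (u ++ v) = tauCount u + tauCount v := by
  simp [tauCount, List.filter_append]

lemma tauCount_simple {u : List (Letter c d)} (hu : SimpleWord u) : tauCount u = 0 := by
  simp only [tauCount, List.length_eq_zero_iff, List.filter_eq_nil_iff]
  intro a ha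
  obtain ⟨i, rfl⟩ := hu a ha
  simp [isTau]

lemma tauCount_asm {bs : List (Blk c d)} (hs : Simp bs) : tauCount (asm bs) = bs.length := by
  induction bs with
  | nil => simp [tauCount]
  | cons b bs ih =>
    have hb : SimpleWord b.1 := hs b (List.mem_cons_self)
    have hs' : Simp bs := fun x hx => hs x (List.mem_cons_of_mem _ hx)
    rw [asm_cons, ← List.singleton_append, ← List.append_assoc, tauCount_append,
      tauCount_append, tauCount_simple hb, ih hs']
    simp [tauCount, isTau, Nat.add_comm, List.filter_cons]


lemma mem_xiStar_iff {u : List (Letter c d)} :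
    u ∈ (letterLang (xiSet c d))∗ ↔ SimpleWord u := by
  rw [Language.mem_kstar]
  constructor
  · rintro ⟨L, rfl, hL⟩
    intro a ha
    rw [List.mem_flatten] at ha
    obtain ⟨y, hy, hay⟩ := ha
    obtain ⟨b, hb, rfl⟩ := hL y hy
    obtain ⟨i, rfl⟩ := hb
    rw [List.mem_singleton] at hay
    exact ⟨i, hay⟩
  · intro hu
    refine ⟨u.map (fun a => [a]), by
      clear hu
      induction u with
      | nil => rfl
      | cons a u ih => rw [List.map_cons, List.flatten_cons, ← ih]; rfl, ?_⟩
    intro y hy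
    rw [List.mem_map] at hy
    obtain ⟨a, ha, rfl⟩ := hy
    obtain ⟨i, rfl⟩ := hu a ha
    exact ⟨Letter.xi i, ⟨i, rfl⟩, rfl⟩

lemma mem_LLbar_iff {j : Fin (d + 1)} {v : List (Letter c d)} :
    v ∈ LLbar c d j ↔ ∃ bs : List (Blk c d), v = asm bs ∧ Simp bs ∧ ∀ b ∈ bs, b.2 = j := by
  rw [LLbar, Language.mem_kstar]
  constructor
  · rintro ⟨L, rfl, hL⟩
    induction L with
    | nil => exact ⟨[], rfl, fun b hb => absurd hb (List.not_mem_nil), fun b hb => absurd hb (List.not_mem_nil)⟩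
    | cons y L ih =>
      obtain ⟨bs, hbs, hsimp, hj⟩ := ih (fun z hz => hL z (List.mem_cons_of_mem _ hz))
      obtain ⟨s, hs, t, ht, hy⟩ := Language.mem_mul.1 (hL y (List.mem_cons_self))
      change t = _ at ht
      subst ht
      refine ⟨(s, j) :: bs, ?_, ?_, ?_⟩
      · rw [List.flatten_cons, ← hy, hbs, asm_cons, List.append_assoc]
        rfl
      · exact (List.forall_mem_cons).2 ⟨mem_xiStar_iff.1 hs, hsimp⟩
      · exact (List.forall_mem_cons).2 ⟨rfl, hj⟩
  · rintro ⟨bs, rfl, hsimp, hj⟩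
    refine ⟨bs.map (fun b => b.1 ++ [Letter.tau b.2]), ?_, ?_⟩
    · rfl
    · intro y hy
      rw [List.mem_map] at hy
      obtain ⟨b, hb, rfl⟩ := hy
      rw [Language.mem_mul]
      exact ⟨b.1, mem_xiStar_iff.2 (hsimp b hb), [Letter.tau b.2], by rw [hj b hb]; rfl, rfl⟩

lemma LL_blocks {j : Fin (d + 1)} {u : List (Letter c d)} (hu : u ∈ LL c d j) :
    ∃ bs : List (Blk c d), u ++ [Letter.tau j] = asm bs ∧ Simp bs ∧
      (∀ b ∈ bs, b.2 = j) ∧ bs ≠ [] := by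
  rw [LL] at hu
  have hall : ∀ a ∈ u, (∃ i, a = Letter.xi i) ∨ a = Letter.tau j := by
    intro a ha
    rw [Language.mem_kstar] at hu
    obtain ⟨L, rfl, hL⟩ := hu
    rw [List.mem_flatten] at ha
    obtain ⟨y, hy, hay⟩ := ha
    obtain ⟨b, hb, rfl⟩ := hL y hy
    rw [List.mem_singleton] at hay
    subst hay
    rcases hb with ⟨i, rfl⟩ | hb
    · exact Or.inl ⟨i, rfl⟩
    · exact Or.inr hb
  clear hu
  induction u with
  | nil =>
    refine ⟨[([], j)], rfl, ?_, ?_, by simp⟩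
    · exact (List.forall_mem_cons).2 ⟨fun a ha => absurd ha (List.not_mem_nil),
        fun b hb => absurd hb (List.not_mem_nil)⟩
    · exact (List.forall_mem_cons).2 ⟨rfl, fun b hb => absurd hb (List.not_mem_nil)⟩
  | cons a u ih =>
    obtain ⟨bs, hbs, hsimp, hj, hne⟩ := ih (fun x hx => hall x (List.mem_cons_of_mem _ hx))
    rcases hall a (List.mem_cons_self) with ⟨i, rfl⟩ | rfl
    · -- prepend ξ to the first block
      obtain ⟨b₀, bs', rfl⟩ : ∃ b₀ bs', bs = b₀ :: bs' := by
        cases bs with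
        | nil => exact absurd rfl hne
        | cons b₀ bs' => exact ⟨b₀, bs', rfl⟩
      refine ⟨(Letter.xi i :: b₀.1, b₀.2) :: bs', ?_, ?_, ?_, by simp⟩
      · rw [asm_cons] at hbs ⊢
        rw [List.cons_append, hbs]
        rfl
      · refine (List.forall_mem_cons).2 ⟨?_, fun x hx => hsimp x (List.mem_cons_of_mem _ hx)⟩
        exact (List.forall_mem_cons).2 ⟨⟨i, rfl⟩, hsimp b₀ (List.mem_cons_self)⟩
      · exact (List.forall_mem_cons).2 ⟨hj b₀ (List.mem_cons_self),
          fun x hx => hj x (List.mem_cons_of_mem _ hx)⟩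
    · refine ⟨([], j) :: bs, ?_, ?_, ?_, by simp⟩
      · rw [asm_cons, ← hbs]; rfl
      · exact (List.forall_mem_cons).2 ⟨fun x hx => absurd hx (List.not_mem_nil), hsimp⟩
      · exact (List.forall_mem_cons).2 ⟨rfl, hj⟩

lemma simple_head_split {s s' u u' : List (Letter c d)} {j j' : Fin (d + 1)}
    (hs : SimpleWord s) (hs' : SimpleWord s')
    (h : s ++ Letter.tau j :: u = s' ++ Letter.tau j' :: u') :
    s = s' ∧ j = j' ∧ u = u' := by
  induction s generalizing s' with
  | nil =>
    cases s' with
    | nil =>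
      simp only [List.nil_append, List.cons.injEq] at h
      exact ⟨rfl, (Letter.tau.injEq .. ▸ h.1 : _), h.2⟩
    | cons a s' =>
      simp only [List.nil_append, List.cons_append, List.cons.injEq] at h
      obtain ⟨i, hi⟩ := hs' a (List.mem_cons_self)
      rw [hi] at h
      exact absurd h.1 (by simp)
  | cons a s ih =>
    cases s' with
    | nil =>
      simp only [List.nil_append, List.cons_append, List.cons.injEq] at h
      obtain ⟨i, hi⟩ := hs a (List.mem_cons_self)
      rw [hi] at h
      exact absurd h.1 (by simp)
    | cons a' s' =>
      simp only [List.cons_append, List.cons.injEq] at h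
      obtain ⟨hs2, hj, hu⟩ := ih (fun x hx => hs x (List.mem_cons_of_mem _ hx))
        (fun x hx => hs' x (List.mem_cons_of_mem _ hx)) h.2
      exact ⟨by rw [h.1, hs2], hj, hu⟩

lemma asm_inj {bs bs' : List (Blk c d)} (hs : Simp bs) (hs' : Simp bs')
    (h : asm bs = asm bs') : bs = bs' := by
  induction bs generalizing bs' with
  | nil =>
    cases bs' with
    | nil => rfl
    | cons b bs' =>
      rw [asm_nil, asm_cons] at h
      exact absurd h.symm (by simp)
  | cons b bs ih =>
    cases bs' with
    | nil =>
      rw [asm_nil, asm_cons] at h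
      exact absurd h (by simp)
    | cons b' bs' =>
      rw [asm_cons, asm_cons] at h
      obtain ⟨h1, h2, h3⟩ := simple_head_split (hs b (List.mem_cons_self))
        (hs' b' (List.mem_cons_self)) h
      have : bs = bs' := ih (fun x hx => hs x (List.mem_cons_of_mem _ hx))
        (fun x hx => hs' x (List.mem_cons_of_mem _ hx)) h3
      rw [this, Prod.ext h1 h2]


def key (d : ℕ) (j : Fin (d + 1)) : ℕ := if (j : ℕ) = 0 then d + 1 else (j : ℕ)

def SortedKey {d : ℕ} (js : List (Fin (d + 1))) : Prop :=
  js.Pairwise (fun a b => key d a ≤ key d b)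

lemma key_le_iff {K : ℕ} (hK : K ≤ d) (j : Fin (d + 1)) :
    key d j ≤ K ↔ (1 ≤ (j : ℕ) ∧ (j : ℕ) ≤ K) := by
  unfold key
  by_cases h : (j : ℕ) = 0 <;> simp [h] <;> omega

lemma cnt_eq_countP_key {K : ℕ} (hK : K ≤ d) (js : List (Fin (d + 1))) :
    cnt K js = js.countP (fun j => decide (key d j ≤ K)) := by
  unfold cnt
  apply List.countP_congr
  intro j _
  simp [key_le_iff hK]

lemma cnt_le_length {K : ℕ} (js : List (Fin (d + 1))) : cnt K js ≤ js.length :=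
  List.countP_le_length

lemma cnt_pos_of_mem {K : ℕ} {js : List (Fin (d + 1))} {j : Fin (d + 1)}
    (hj : j ∈ js) (h1 : 1 ≤ (j : ℕ)) (h2 : (j : ℕ) ≤ K) : 1 ≤ cnt K js := by
  unfold cnt
  rw [Nat.succ_le_iff, List.countP_pos_iff]
  exact ⟨j, hj, by simp [h1, h2]⟩

lemma cnt_append {K : ℕ} (js js' : List (Fin (d + 1))) :
    cnt K (js ++ js') = cnt K js + cnt K js' := List.countP_append

/-- In a key-sorted list, positions below the count satisfy the property. -/
lemma sorted_get_of_lt_cnt {K : ℕ} (hK : K ≤ d) {js : List (Fin (d + 1))}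
    (hs : SortedKey js) (t : Fin js.length) (ht : (t : ℕ) < cnt K js) :
    1 ≤ ((js.get t) : ℕ) ∧ ((js.get t) : ℕ) ≤ K := by
  rw [← key_le_iff hK]
  by_contra h
  push_neg at h
  have hdrop : List.countP (fun j => decide (key d j ≤ K)) (js.drop (t : ℕ)) = 0 := by
    rw [List.countP_eq_zero]
    intro a ha
    obtain ⟨i, hi, hia⟩ := List.mem_iff_getElem.1 ha
    rw [List.getElem_drop] at hia
    have hkey : key d (js.get t) ≤ key d a := by
      rcases Nat.eq_zero_or_pos i with rfl | hpos
      · rw [← hia]; simp [List.get_eq_getElem]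
      · have hlt : (t : ℕ) < (t : ℕ) + i := by omega
        have := (List.pairwise_iff_get.1 hs) t ⟨(t : ℕ) + i, by
          have := hi; rw [List.length_drop] at this; omega⟩ hlt
        rw [← hia]
        simpa [List.get_eq_getElem] using this
    simp only [decide_eq_true_eq]
    omega
  have hsplit : cnt K js ≤ (t : ℕ) := by
    rw [cnt_eq_countP_key hK]
    conv_lhs => rw [← List.take_append_drop (t : ℕ) js]
    rw [List.countP_append, hdrop]
    have h2 := List.countP_le_length (p := fun j => decide (key d j ≤ K))
      (l := js.take (t : ℕ))
    rw [List.length_take] at h2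
    omega
  omega

/-- Conversely, if position `t` satisfies the property then `t < cnt`. -/
lemma lt_cnt_of_get {K : ℕ} (hK : K ≤ d) {js : List (Fin (d + 1))}
    (hs : SortedKey js) (t : Fin js.length)
    (h1 : 1 ≤ ((js.get t) : ℕ)) (h2 : ((js.get t) : ℕ) ≤ K) :
    (t : ℕ) < cnt K js := by
  have htake : List.countP (fun j => decide (key d j ≤ K)) (js.take ((t : ℕ) + 1))
      = (t : ℕ) + 1 := by
    have hlen : (js.take ((t : ℕ) + 1)).length = (t : ℕ) + 1 := by
      rw [List.length_take]; omega
    conv_rhs => rw [← hlen]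
    apply List.countP_eq_length.2
    intro a ha
    obtain ⟨i, hi, hia⟩ := List.mem_iff_getElem.1 ha
    rw [List.getElem_take] at hia
    have hkey : key d a ≤ key d (js.get t) := by
      rw [hlen] at hi
      rcases Nat.lt_or_ge i (t : ℕ) with hlt | hge
      · have := (List.pairwise_iff_get.1 hs) ⟨i, by omega⟩ t hlt
        rw [← hia]
        simpa [List.get_eq_getElem] using this
      · have : i = (t : ℕ) := by omega
        subst this
        rw [← hia]
        simp [List.get_eq_getElem]
    have : key d (js.get t) ≤ K := (key_le_iff hK _).2 ⟨h1, h2⟩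
    simp only [decide_eq_true_eq]
    omega
  have : List.countP (fun j => decide (key d j ≤ K)) js ≥ (t : ℕ) + 1 := by
    conv_lhs => rw [← List.take_append_drop ((t : ℕ) + 1) js]
    rw [List.countP_append, htake]
    omega
  rw [cnt_eq_countP_key hK]
  omega


/-- Matching of a pattern list against a block list. -/
inductive MatL : List (List (Letter c d) × Fin (d + 1)) → List (Blk c d) → Prop
  | nil (bs : List (Blk c d)) : (∀ b ∈ bs, b.2 = 0) → MatL [] bs
  | cons (w₀ : List (Letter c d)) (i₀ : Fin (d + 1)) (L : List (List (Letter c d) × Fin (d + 1)))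
      (bs0 : List (Blk c d)) (s : List (Letter c d)) (bs1 : List (Blk c d)) :
      (∀ b ∈ bs0, b.2 = i₀) → (∀ pt, (eta w₀).1 pt ≤ (eta s).1 pt) →
      MatL L bs1 → MatL ((w₀, i₀) :: L) (bs0 ++ (s, i₀) :: bs1)

def patLang (L : List (List (Letter c d) × Fin (d + 1))) : Language (Letter c d) :=
  (L.map fun p => LLbar c d p.2 * NW p.1 * ({[Letter.tau p.2]} : Language (Letter c d))).prod
    * LLbar c d 0

lemma mem_patLang_iff {L : List (List (Letter c d) × Fin (d + 1))} {v : List (Letter c d)} :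
    v ∈ patLang L ↔ ∃ bs : List (Blk c d), v = asm bs ∧ Simp bs ∧ MatL L bs := by
  induction L generalizing v with
  | nil =>
    rw [patLang, List.map_nil, List.prod_nil, one_mul, mem_LLbar_iff]
    constructor
    · rintro ⟨bs, rfl, hsimp, h0⟩
      exact ⟨bs, rfl, hsimp, MatL.nil bs h0⟩
    · rintro ⟨bs, rfl, hsimp, hmat⟩
      cases hmat with
      | nil _ h0 => exact ⟨bs, rfl, hsimp, h0⟩
  | cons p L ih =>
    have hlang : patLang (p :: L) =
        (LLbar c d p.2 * NW p.1 * ({[Letter.tau p.2]} : Language (Letter c d))) * patLang L := by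
      rw [patLang, List.map_cons, List.prod_cons, patLang, mul_assoc]
    rw [hlang]
    constructor
    · intro hv
      obtain ⟨y, hy, rest, hrest, hv'⟩ := Language.mem_mul.1 hv
      obtain ⟨y1, hy1, t, ht, hy'⟩ := Language.mem_mul.1 hy
      obtain ⟨a, ha, sw, hsw, hy1'⟩ := Language.mem_mul.1 hy1
      change t = _ at ht
      subst ht
      obtain ⟨bs0, rfl, hsimp0, hj0⟩ := mem_LLbar_iff.1 ha
      obtain ⟨hssimp, hdiv⟩ := hsw
      obtain ⟨bs1, rfl, hsimp1, hmat1⟩ := ih.1 hrest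
      refine ⟨bs0 ++ (sw, p.2) :: bs1, ?_, ?_, ?_⟩
      · rw [← hv', ← hy', ← hy1', asm_append, asm_cons]
        simp [List.append_assoc]
      · intro b hb
        rcases List.mem_append.1 hb with hb | hb
        · exact hsimp0 b hb
        · rcases List.mem_cons.1 hb with rfl | hb
          · exact hssimp
          · exact hsimp1 b hb
      · exact MatL.cons p.1 p.2 L bs0 sw bs1 hj0 hdiv hmat1
    · rintro ⟨bs, rfl, hsimp, hmat⟩
      cases hmat with
      | cons w₀ i₀ L bs0 s bs1 hj0 hdiv hmat1 =>
        rw [Language.mem_mul]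
        refine ⟨asm bs0 ++ s ++ [Letter.tau i₀], ?_, asm bs1, ?_, ?_⟩
        · rw [Language.mem_mul]
          refine ⟨asm bs0 ++ s, ?_, [Letter.tau i₀], rfl, rfl⟩
          rw [Language.mem_mul]
          refine ⟨asm bs0, ?_, s, ?_, rfl⟩
          · exact mem_LLbar_iff.2 ⟨bs0, rfl, fun b hb => hsimp b (List.mem_append_left _ hb), hj0⟩
          · exact ⟨hsimp (s, i₀) (List.mem_append_right _ (List.mem_cons_self)), hdiv⟩
        · exact ih.2 ⟨bs1, rfl, fun b hb =>
            hsimp b (List.mem_append_right _ (List.mem_cons_of_mem _ hb)), hmat1⟩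
        · rw [asm_append, asm_cons]
          simp [List.append_assoc]

lemma gen_shape (ks : List (Fin (d + 1))) (hne : ∀ k ∈ ks, (k : ℕ) ≠ 0)
    (hsort : ks.Pairwise (fun a b : Fin (d + 1) => (a : ℕ) < (b : ℕ))) {v : List (Letter c d)}
    (hv : v ∈ (ks.map fun k => LL c d k * ({[Letter.tau k]} : Language (Letter c d))).prod
        * LLbar c d 0) :
    ∃ bs : List (Blk c d), v = asm bs ∧ Simp bs ∧ SortedKey (bs.map Prod.snd) ∧
      (∀ k ∈ ks, k ∈ bs.map Prod.snd) ∧ (∀ j ∈ bs.map Prod.snd, (j : ℕ) = 0 ∨ j ∈ ks) := by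
  induction ks generalizing v with
  | nil =>
    rw [List.map_nil, List.prod_nil, one_mul, mem_LLbar_iff] at hv
    obtain ⟨bs, rfl, hsimp, h0⟩ := hv
    refine ⟨bs, rfl, hsimp, ?_, fun k hk => absurd hk (List.not_mem_nil), ?_⟩
    · apply List.pairwise_of_forall_mem_list
      intro a ha b hb
      rw [List.mem_map] at ha hb
      obtain ⟨x, hx, rfl⟩ := ha
      obtain ⟨y, hy, rfl⟩ := hb
      rw [h0 x hx, h0 y hy]
    · intro j hj
      rw [List.mem_map] at hj
      obtain ⟨x, hx, rfl⟩ := hj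
      rw [h0 x hx]
      exact Or.inl rfl
  | cons k₀ ks ih =>
    rw [List.map_cons, List.prod_cons, mul_assoc] at hv
    obtain ⟨y, hy, rest, hrest, hv'⟩ := Language.mem_mul.1 hv
    obtain ⟨u, hu, t, ht, hy'⟩ := Language.mem_mul.1 hy
    change t = _ at ht
    subst ht
    obtain ⟨bs0, hbs0, hsimp0, hj0, hne0⟩ := LL_blocks hu
    obtain ⟨bs1, rfl, hsimp1, hsort1, hocc1, hmem1⟩ :=
      ih (fun k hk => hne k (List.mem_cons_of_mem _ hk)) (List.Pairwise.sublist (List.sublist_cons_self _ _) hsort) hrest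
    have hk0d : (k₀ : ℕ) ≤ d := by have := k₀.isLt; omega
    refine ⟨bs0 ++ bs1, ?_, ?_, ?_, ?_, ?_⟩
    · rw [← hv', ← hy', hbs0, asm_append]
    · intro b hb
      rcases List.mem_append.1 hb with hb | hb
      · exact hsimp0 b hb
      · exact hsimp1 b hb
    · rw [List.map_append]
      unfold SortedKey at hsort1 ⊢
      rw [List.pairwise_append]
      refine ⟨?_, hsort1, ?_⟩
      · apply List.pairwise_of_forall_mem_list
        intro a ha b hb
        rw [List.mem_map] at ha hb
        obtain ⟨x, hx, rfl⟩ := ha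
        obtain ⟨y2, hy2, rfl⟩ := hb
        rw [hj0 x hx, hj0 y2 hy2]
      · intro a ha b hb
        rw [List.mem_map] at ha
        obtain ⟨x, hx, rfl⟩ := ha
        rw [hj0 x hx]
        have hkk₀ : key d k₀ = (k₀ : ℕ) := by
          unfold key
          simp [hne k₀ (List.mem_cons_self)]
        rcases hmem1 b hb with hb0 | hbks
        · have : key d b = d + 1 := by unfold key; simp [hb0]
          rw [hkk₀, this]
          have := k₀.isLt
          omega
        · have hbne : (b : ℕ) ≠ 0 := hne b (List.mem_cons_of_mem _ hbks)
          have : key d b = (b : ℕ) := by unfold key; simp [hbne]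
          rw [hkk₀, this]
          have := List.rel_of_pairwise_cons hsort hbks
          omega
    · intro k hk
      rcases List.mem_cons.1 hk with rfl | hk
      · cases bs0 with
        | nil => exact absurd rfl hne0
        | cons b₀ bs0' =>
          rw [List.map_append]
          exact List.mem_append_left _ (by
            rw [List.map_cons]
            exact (hj0 b₀ (List.mem_cons_self)) ▸ List.mem_cons_self)
      · rw [List.map_append]
        exact List.mem_append_right _ (hocc1 k hk)
    · intro j hj
      rw [List.map_append, List.mem_append] at hj
      rcases hj with hj | hj
      · rw [List.mem_map] at hj
        obtain ⟨x, hx, rfl⟩ := hj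
        rw [hj0 x hx]
        exact Or.inr (List.mem_cons_self)
      · rcases hmem1 j hj with h | h
        · exact Or.inl h
        · exact Or.inr (List.mem_cons_of_mem _ h)

lemma LFull_eq (c d : ℕ) :
    LFull c d = ((((List.finRange d).map Fin.succ).map
        fun k => LL c d k * ({[Letter.tau k]} : Language (Letter c d))).prod) * LLbar c d 0 := by
  rw [LFull, List.map_map]
  rfl

lemma shape_of_LFull {v : List (Letter c d)} (hv : v ∈ LFull c d) :
    ∃ bs : List (Blk c d), v = asm bs ∧ Simp bs ∧ SortedKey (bs.map Prod.snd) ∧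
      (∀ K : ℕ, 1 ≤ K → K ≤ d → ∃ j ∈ bs.map Prod.snd, (j : ℕ) = K) := by
  rw [LFull_eq] at hv
  obtain ⟨bs, h1, h2, h3, h4, _⟩ := gen_shape ((List.finRange d).map Fin.succ)
    (by
      intro k hk
      rw [List.mem_map] at hk
      obtain ⟨x, _, rfl⟩ := hk
      simp [Fin.val_succ])
    (by
      rw [List.pairwise_map]
      apply (List.pairwise_lt_finRange d).imp
      intro a b hab
      simp only [Fin.val_succ]
      omega)
    hv
  refine ⟨bs, h1, h2, h3, ?_⟩
  intro K hK1 hK2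
  have : (⟨K, by omega⟩ : Fin (d + 1)) ∈ bs.map Prod.snd := by
    apply h4
    rw [List.mem_map]
    refine ⟨⟨K - 1, by omega⟩, List.mem_finRange _, ?_⟩
    apply Fin.ext
    simp [Fin.val_succ]
    omega
  exact ⟨_, this, rfl⟩


lemma finCases_strictMono {n : ℕ} {x : ℕ} {f : Fin n → ℕ} (hf : StrictMono f)
    (hx : ∀ l, x < f l) : StrictMono (Fin.cases x f : Fin (n + 1) → ℕ) := by
  intro a b hab
  induction a using Fin.cases with
  | zero =>
    induction b using Fin.cases with
    | zero => exact absurd hab (lt_irrefl _)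
    | succ j => simpa using hx j
  | succ i =>
    induction b using Fin.cases with
    | zero => exact absurd hab (by simp [Fin.lt_iff_val_lt_val])
    | succ j =>
      simp only [Fin.cases_succ]
      exact hf (by rwa [Fin.succ_lt_succ_iff] at hab)

lemma seg_append_cons (bs0 : List (Blk c d)) (b : Blk c d) (bs1 : List (Blk c d)) :
    seg (bs0 ++ b :: bs1) bs0.length = b.1 := by
  unfold seg
  rw [List.getD_append_right _ _ _ _ le_rfl]
  simp

lemma seg_shift (bs0 : List (Blk c d)) (b : Blk c d) (bs1 : List (Blk c d)) (t : ℕ) :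
    seg (bs0 ++ b :: bs1) (bs0.length + 1 + t) = seg bs1 t := by
  unfold seg
  rw [List.getD_append_right _ _ _ _ (by omega)]
  have : bs0.length + 1 + t - bs0.length = t + 1 := by omega
  rw [this]
  rfl

lemma cnt_cons {K : ℕ} (j : Fin (d + 1)) (js : List (Fin (d + 1))) :
    cnt K (j :: js) = (if 1 ≤ (j : ℕ) ∧ (j : ℕ) ≤ K then 1 else 0) + cnt K js := by
  unfold cnt
  rw [List.countP_cons]
  by_cases h : 1 ≤ (j : ℕ) ∧ (j : ℕ) ≤ K <;> simp [h, Nat.add_comm]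

lemma cnt_const {K : ℕ} {i₀ : Fin (d + 1)} {js : List (Fin (d + 1))}
    (h : ∀ j ∈ js, j = i₀) :
    cnt K js = if 1 ≤ (i₀ : ℕ) ∧ (i₀ : ℕ) ≤ K then js.length else 0 := by
  by_cases hp : 1 ≤ (i₀ : ℕ) ∧ (i₀ : ℕ) ≤ K
  · rw [if_pos hp]
    apply List.countP_eq_length.2
    intro a ha
    rw [h a ha]
    simp [hp]
  · rw [if_neg hp]
    apply List.countP_eq_zero.2
    intro a ha
    rw [h a ha]
    simp only [decide_eq_true_eq]
    exact hp

lemma key_gt_of_not {K : ℕ} (hK : K ≤ d) {j : Fin (d + 1)}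
    (h : ¬(1 ≤ (j : ℕ) ∧ (j : ℕ) ≤ K)) : K < key d j := by
  unfold key
  by_cases h0 : (j : ℕ) = 0 <;> simp [h0] <;> omega

lemma not_of_key_gt {K : ℕ} {j : Fin (d + 1)} (h : K < key d j) :
    ¬(1 ≤ (j : ℕ) ∧ (j : ℕ) ≤ K) := by
  unfold key at h
  by_cases h0 : (j : ℕ) = 0 <;> simp [h0] at h ⊢ <;> omega

/-- Direction A: from a matching, produce the embedding data. -/
lemma matL_to_e {L : List (List (Letter c d) × Fin (d + 1))} {bs : List (Blk c d)}
    (h : MatL L bs) :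
    SortedKey (L.map Prod.snd) →
    ∃ e : Fin L.length → ℕ, StrictMono e ∧ (∀ l, 1 ≤ e l ∧ e l ≤ bs.length) ∧
      (∀ l : Fin L.length, ∀ pt, (eta (L.get l).1).1 pt ≤ (eta (seg bs (e l - 1))).1 pt) ∧
      (∀ K : ℕ, K ≤ d →
        (cnt K (L.map Prod.snd) = 0 → cnt K (bs.map Prod.snd) = 0) ∧
        (∀ l : Fin L.length, (l : ℕ) + 1 = cnt K (L.map Prod.snd) →
          cnt K (bs.map Prod.snd) = e l)) := by
  induction h with
  | nil bs h0 =>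
    intro _
    refine ⟨Fin.elim0, fun a => a.elim0, fun a => a.elim0, fun a => a.elim0, ?_⟩
    intro K _
    refine ⟨fun _ => ?_, fun l => l.elim0⟩
    apply List.countP_eq_zero.2
    intro a ha
    rw [List.mem_map] at ha
    obtain ⟨b, hb, rfl⟩ := ha
    rw [h0 b hb]
    simp
  | cons w₀ i₀ L bs0 s bs1 hj0 hdiv hmat ih =>
    intro hsort
    rw [List.map_cons] at hsort
    have hsort' : SortedKey (L.map Prod.snd) := (List.pairwise_cons.1 hsort).2
    have hcross : ∀ j ∈ L.map Prod.snd, key d i₀ ≤ key d j :=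
      (List.pairwise_cons.1 hsort).1
    obtain ⟨e, hmono, hbd, hdiv', hcnt⟩ := ih hsort'
    set n₀ := bs0.length with hn₀
    refine ⟨Fin.cases (n₀ + 1) (fun l => n₀ + 1 + e l), ?_, ?_, ?_, ?_⟩
    · exact finCases_strictMono
        (fun a b hab => by
          have := hmono hab
          omega)
        (fun l => by have := (hbd l).1; omega)
    · intro l
      induction l using Fin.cases with
      | zero =>
        simp only [Fin.cases_zero]
        constructor
        · omega
        · rw [List.length_append, List.length_cons]; omega
      | succ l =>
        simp only [Fin.cases_succ]
        have h1 := (hbd l).1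
        have h2 := (hbd l).2
        constructor
        · omega
        · rw [List.length_append, List.length_cons]; omega
    · intro l pt
      induction l using Fin.cases with
      | zero =>
        simp only [Fin.cases_zero]
        have : n₀ + 1 - 1 = n₀ := by omega
        rw [this, seg_append_cons]
        exact hdiv pt
      | succ l =>
        simp only [Fin.cases_succ]
        have h1 := (hbd l).1
        have : n₀ + 1 + e l - 1 = n₀ + 1 + (e l - 1) := by omega
        rw [this, seg_shift]
        exact hdiv' l pt
    · intro K hK
      have hjs : (bs0 ++ (s, i₀) :: bs1).map Prod.snd
          = bs0.map Prod.snd ++ i₀ :: bs1.map Prod.snd := by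
        rw [List.map_append, List.map_cons]
      have hcnt_bs : cnt K ((bs0 ++ (s, i₀) :: bs1).map Prod.snd)
          = (if 1 ≤ (i₀ : ℕ) ∧ (i₀ : ℕ) ≤ K then n₀ + 1 else 0) + cnt K (bs1.map Prod.snd) := by
        rw [hjs, cnt_append, cnt_cons]
        have hconst : cnt K (bs0.map Prod.snd)
            = if 1 ≤ (i₀ : ℕ) ∧ (i₀ : ℕ) ≤ K then n₀ else 0 := by
          rw [cnt_const (i₀ := i₀) (by
            intro j hj
            rw [List.mem_map] at hj
            obtain ⟨b, hb, rfl⟩ := hj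
            exact hj0 b hb)]
          simp [hn₀]
        rw [hconst]
        by_cases hp : 1 ≤ (i₀ : ℕ) ∧ (i₀ : ℕ) ≤ K <;> simp [hp] <;> omega
      have hcnt_L : cnt K (((w₀, i₀) :: L).map Prod.snd)
          = (if 1 ≤ (i₀ : ℕ) ∧ (i₀ : ℕ) ≤ K then 1 else 0) + cnt K (L.map Prod.snd) := by
        rw [List.map_cons, cnt_cons]
      by_cases hp : 1 ≤ (i₀ : ℕ) ∧ (i₀ : ℕ) ≤ K
      · rw [if_pos hp] at hcnt_bs
        rw [if_pos hp] at hcnt_L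
        constructor
        · intro h
          rw [hcnt_L] at h
          omega
        · intro l hl
          rw [hcnt_L] at hl
          induction l using Fin.cases with
          | zero =>
            simp only [Fin.cases_zero]
            have h0 : cnt K (L.map Prod.snd) = 0 := by
              simp only [Fin.val_zero] at hl
              omega
            rw [hcnt_bs, (hcnt K hK).1 h0]
          | succ l =>
            simp only [Fin.cases_succ]
            have hl' : (l : ℕ) + 1 = cnt K (L.map Prod.snd) := by
              simp only [Fin.val_succ] at hl
              omega
            rw [hcnt_bs, (hcnt K hK).2 l hl']
      · -- i₀ not counted; by sortedness nothing in L is counted either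
        have hL0 : cnt K (L.map Prod.snd) = 0 := by
          apply List.countP_eq_zero.2
          intro j hj
          have := hcross j hj
          have hkey := key_gt_of_not hK hp
          have : K < key d j := by omega
          simp only [decide_eq_true_eq]
          exact not_of_key_gt this
        rw [if_neg hp] at hcnt_bs
        rw [if_neg hp] at hcnt_L
        constructor
        · intro _
          rw [hcnt_bs, (hcnt K hK).1 hL0]
        · intro l hl
          rw [hcnt_L, hL0] at hl
          omega


lemma cnt_zero (js : List (Fin (d + 1))) : cnt 0 js = 0 := by
  apply List.countP_eq_zero.2
  intro a _
  simp only [decide_eq_true_eq]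
  omega

/-- Direction B: from the embedding data, produce a matching. -/
lemma e_to_matL (L : List (List (Letter c d) × Fin (d + 1))) (bs : List (Blk c d))
    (hsortL : SortedKey (L.map Prod.snd)) (hsortB : SortedKey (bs.map Prod.snd))
    (e : Fin L.length → ℕ) (hmono : StrictMono e)
    (hbd : ∀ l, 1 ≤ e l ∧ e l ≤ bs.length)
    (hdiv : ∀ l : Fin L.length, ∀ pt, (eta (L.get l).1).1 pt ≤ (eta (seg bs (e l - 1))).1 pt)
    (hcnt : ∀ K : ℕ, 1 ≤ K → K ≤ d →
      (cnt K (L.map Prod.snd) = 0 → cnt K (bs.map Prod.snd) = 0) ∧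
      (∀ l : Fin L.length, (l : ℕ) + 1 = cnt K (L.map Prod.snd) →
        cnt K (bs.map Prod.snd) = e l)) :
    MatL L bs := by
  induction L generalizing bs with
  | nil =>
    apply MatL.nil
    intro b hb
    by_contra hne
    have hb2 : 1 ≤ ((b.2 : ℕ)) := by
      rcases Nat.eq_zero_or_pos (b.2 : ℕ) with h | h
      · exact absurd (Fin.ext h) hne
      · exact h
    have hb2d : (b.2 : ℕ) ≤ d := by have := b.2.isLt; omega
    have h0 : cnt (b.2 : ℕ) (bs.map Prod.snd) = 0 := by
      apply (hcnt (b.2 : ℕ) hb2 hb2d).1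
      simp [cnt]
    have : 1 ≤ cnt (b.2 : ℕ) (bs.map Prod.snd) :=
      cnt_pos_of_mem (List.mem_map_of_mem hb) hb2 le_rfl
    omega
  | cons p L' ih =>
    obtain ⟨w₀, i₀⟩ := p
    set js := bs.map Prod.snd with hjs
    set iL' := L'.map Prod.snd with hiL'
    have hjslen : js.length = bs.length := List.length_map _
    set t₀ := e (0 : Fin (L'.length + 1)) with ht₀
    have hbd0 := hbd (0 : Fin (L'.length + 1))
    -- key fill fact
    have hfill : ∀ t : ℕ, t < t₀ → ∀ ht : t < bs.length, (bs.get ⟨t, ht⟩).2 = i₀ := by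
      by_cases hz : (i₀ : ℕ) = 0
      · -- every tau index in bs is 0
        have hall0 : ∀ j ∈ js, (j : ℕ) = 0 := by
          intro j hj
          by_contra hne
          have hj1 : 1 ≤ (j : ℕ) := Nat.pos_of_ne_zero hne
          have hjd : (j : ℕ) ≤ d := by have := j.isLt; omega
          have hiL0 : cnt (j : ℕ) (((w₀, i₀) :: L').map Prod.snd) = 0 := by
            rw [List.map_cons]
            apply List.countP_eq_zero.2
            intro a ha
            rcases List.mem_cons.1 ha with rfl | ha
            · simp only [decide_eq_true_eq]; omega
            · have hkey := List.rel_of_pairwise_cons (by rwa [List.map_cons] at hsortL) ha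
              have : key d i₀ = d + 1 := by unfold key; simp [hz]
              rw [this] at hkey
              simp only [decide_eq_true_eq]
              exact not_of_key_gt (by omega)
          have h0 := (hcnt (j : ℕ) hj1 hjd).1 hiL0
          have : 1 ≤ cnt (j : ℕ) js := cnt_pos_of_mem hj hj1 le_rfl
          omega
        intro t htlt ht
        apply Fin.ext
        rw [hz]
        apply hall0
        rw [hjs]
        exact List.mem_map_of_mem (bs.get_mem _)
      · -- nonzero case : use counts
        have hi1 : 1 ≤ (i₀ : ℕ) := Nat.pos_of_ne_zero hz
        have hid : (i₀ : ℕ) ≤ d := by have := i₀.isLt; omega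
        have hL1 : cnt (i₀ : ℕ) (((w₀, i₀) :: L').map Prod.snd)
            = 1 + cnt (i₀ : ℕ) iL' := by
          rw [List.map_cons, cnt_cons, if_pos ⟨hi1, le_rfl⟩]
        have hlt : cnt (i₀ : ℕ) iL' < ((w₀, i₀) :: L').length := by
          have := cnt_le_length (K := (i₀ : ℕ)) iL'
          rw [hiL']
          rw [List.length_cons]
          have := cnt_le_length (K := (i₀ : ℕ)) (L'.map Prod.snd)
          rw [List.length_map] at this
          omega
        have hq : cnt (i₀ : ℕ) js = e ⟨cnt (i₀ : ℕ) iL', hlt⟩ :=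
          (hcnt (i₀ : ℕ) hi1 hid).2 ⟨cnt (i₀ : ℕ) iL', hlt⟩ (by
            show cnt (i₀ : ℕ) iL' + 1 = _
            rw [hL1]
            omega)
        have hq0 : t₀ ≤ cnt (i₀ : ℕ) js := by
          rw [hq, ht₀]
          exact hmono.monotone (Fin.zero_le _)
        -- nothing is counted below i₀
        have hsmall : cnt ((i₀ : ℕ) - 1) js = 0 := by
          rcases Nat.eq_zero_or_pos ((i₀ : ℕ) - 1) with h | h
          · rw [h]; exact cnt_zero js
          · apply (hcnt ((i₀ : ℕ) - 1) h (by omega)).1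
            rw [List.map_cons]
            apply List.countP_eq_zero.2
            intro a ha
            rcases List.mem_cons.1 ha with rfl | ha
            · simp only [decide_eq_true_eq]; omega
            · have hkey := List.rel_of_pairwise_cons (by rwa [List.map_cons] at hsortL) ha
              have hki : key d i₀ = (i₀ : ℕ) := by unfold key; simp [hz]
              rw [hki] at hkey
              simp only [decide_eq_true_eq]
              exact not_of_key_gt (by omega)
        intro t htlt ht
        have htjs : t < js.length := by omega
        have hrange := sorted_get_of_lt_cnt hid hsortB ⟨t, htjs⟩ (by
          show t < cnt (i₀ : ℕ) js
          omega)
        have hget : js.get ⟨t, htjs⟩ = (bs.get ⟨t, ht⟩).2 := by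
          show (List.map Prod.snd bs).get ⟨t, htjs⟩ = _
          simp [List.get_eq_getElem, List.getElem_map]
        rw [hget] at hrange
        -- not counted with bound i₀ - 1
        have hnotsmall : ¬(1 ≤ ((bs.get ⟨t, ht⟩).2 : ℕ) ∧ ((bs.get ⟨t, ht⟩).2 : ℕ) ≤ (i₀ : ℕ) - 1) := by
          intro hcon
          have : 1 ≤ cnt ((i₀ : ℕ) - 1) js := by
            apply cnt_pos_of_mem (j := (bs.get ⟨t, ht⟩).2) _ hcon.1 hcon.2
            rw [hget.symm]
            exact js.get_mem _
          omega
        apply Fin.ext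
        omega
    -- split bs
    have ht₀len : t₀ - 1 < bs.length := by omega
    have hsplit : bs = bs.take (t₀ - 1) ++ bs.get ⟨t₀ - 1, ht₀len⟩ :: bs.drop t₀ := by
      conv_lhs => rw [← List.take_append_drop (t₀ - 1) bs]
      congr 1
      rw [List.drop_eq_getElem_cons ht₀len]
      congr 2
      omega
    have hb2 : (bs.get ⟨t₀ - 1, ht₀len⟩).2 = i₀ := hfill (t₀ - 1) (by omega) ht₀len
    have htake_all : ∀ b ∈ bs.take (t₀ - 1), b.2 = i₀ := by
      intro b hbmem
      obtain ⟨t, htl, hbt⟩ := List.mem_iff_getElem.1 hbmem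
      rw [List.length_take] at htl
      have ht' : t < bs.length := by omega
      have : b = bs.get ⟨t, ht'⟩ := by
        rw [← hbt, List.getElem_take]
        rfl
      rw [this]
      exact hfill t (by omega) ht'
    -- counts of the prefix of js
    have htakejs : ∀ K : ℕ, cnt K (js.take t₀)
        = if 1 ≤ (i₀ : ℕ) ∧ (i₀ : ℕ) ≤ K then t₀ else 0 := by
      intro K
      rw [cnt_const (i₀ := i₀) ?hall]
      case hall =>
        intro j hjmem
        obtain ⟨t, htl, hjt⟩ := List.mem_iff_getElem.1 hjmem
        rw [List.length_take] at htl
        have htjs : t < js.length := by omega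
        have htb : t < bs.length := by omega
        rw [← hjt, List.getElem_take]
        show js.get ⟨t, htjs⟩ = i₀
        have hget : js.get ⟨t, htjs⟩ = (bs.get ⟨t, htb⟩).2 := by
          show (List.map Prod.snd bs).get ⟨t, htjs⟩ = _
          simp [List.get_eq_getElem, List.getElem_map]
        rw [hget]
        exact hfill t (by omega) htb
      rw [List.length_take]
      congr 1
      omega
    have hsplitc : ∀ K : ℕ, cnt K js = cnt K (js.take t₀) + cnt K (js.drop t₀) := by
      intro K
      conv_lhs => rw [← List.take_append_drop t₀ js]
      exact cnt_append _ _
    have hdropjs : js.drop t₀ = (bs.drop t₀).map Prod.snd := by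
      rw [hjs, List.map_drop]
    -- apply the constructor
    rw [hsplit, show (bs.get ⟨t₀ - 1, ht₀len⟩) = ((bs.get ⟨t₀ - 1, ht₀len⟩).1, i₀) from by
      rw [← hb2]]
    apply MatL.cons _ _ _ _ _ _ htake_all
    · -- divisibility for the head
      have := hdiv (0 : Fin (L'.length + 1))
      have hseg : seg bs (t₀ - 1) = (bs.get ⟨t₀ - 1, ht₀len⟩).1 := by
        unfold seg
        rw [List.getD_eq_getElem _ _ ht₀len]
        rfl
      intro pt
      have h := hdiv (0 : Fin (L'.length + 1)) pt
      rw [show e (0 : Fin (L'.length + 1)) = t₀ from rfl, hseg] at h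
      exact h
    · -- recursive call
      apply ih (bs.drop t₀) ((List.pairwise_cons.1 (by rwa [List.map_cons] at hsortL)).2)
        (by rw [← hdropjs]; exact hsortB.sublist (List.drop_sublist _ _))
        (fun l => e l.succ - t₀)
      · -- strict mono
        intro a b hab
        have h1 : e a.succ < e b.succ := hmono (by rwa [Fin.succ_lt_succ_iff])
        have h2 : t₀ < e a.succ := hmono (by
          show (0 : Fin _) < a.succ
          simp [Fin.lt_iff_val_lt_val])
        show e a.succ - t₀ < e b.succ - t₀
        omega
      · -- bounds
        intro l
        have h2 : t₀ < e l.succ := hmono (by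
          show (0 : Fin _) < l.succ
          simp [Fin.lt_iff_val_lt_val])
        have h3 := (hbd l.succ).2
        constructor
        · show 1 ≤ e l.succ - t₀
          omega
        · show e l.succ - t₀ ≤ (bs.drop t₀).length
          rw [List.length_drop]
          omega
      · -- divisibility
        intro l pt
        have h2 : t₀ < e l.succ := hmono (by
          show (0 : Fin _) < l.succ
          simp [Fin.lt_iff_val_lt_val])
        show (eta (L'.get l).1).1 pt ≤ (eta (seg (bs.drop t₀) (e l.succ - t₀ - 1))).1 pt
        have hsegeq : seg (bs.drop t₀) (e l.succ - t₀ - 1) = seg bs (e l.succ - 1) := by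
          conv_rhs => rw [hsplit]
          have hlen : (bs.take (t₀ - 1)).length = t₀ - 1 := by
            rw [List.length_take]; omega
          have : e l.succ - 1 = (bs.take (t₀ - 1)).length + 1 + (e l.succ - t₀ - 1) := by
            rw [hlen]; omega
          rw [this, seg_shift]
        rw [hsegeq]
        exact hdiv l.succ pt
      · -- counts
        intro K hK1 hKd
        have hmain := hcnt K hK1 hKd
        have hLK : cnt K (((w₀, i₀) :: L').map Prod.snd)
            = (if 1 ≤ (i₀ : ℕ) ∧ (i₀ : ℕ) ≤ K then 1 else 0) + cnt K (L'.map Prod.snd) := by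
          rw [List.map_cons, cnt_cons]
        by_cases hp : 1 ≤ (i₀ : ℕ) ∧ (i₀ : ℕ) ≤ K
        · rw [if_pos hp] at hLK
          constructor
          · intro h0
            have h1 : cnt K (((w₀, i₀) :: L').map Prod.snd) = 1 := by rw [hLK, h0]
            have hq : cnt K js = e (0 : Fin (L'.length + 1)) := hmain.2 (0 : Fin (L'.length + 1)) (by rw [h1]; rfl)
            have := hsplitc K
            rw [htakejs K, if_pos hp] at this
            rw [← hdropjs]
            have he0 : e (0 : Fin (L'.length + 1)) = t₀ := rfl
            omega
          · intro l hl
            have hsucc : ((l.succ : Fin (L'.length + 1)) : ℕ) + 1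
                = cnt K (((w₀, i₀) :: L').map Prod.snd) := by
              rw [hLK, Fin.val_succ]
              rw [hiL'] at hl
              omega
            have hq : cnt K js = e l.succ := hmain.2 l.succ hsucc
            have := hsplitc K
            rw [htakejs K, if_pos hp] at this
            rw [← hdropjs]
            show cnt K (js.drop t₀) = e l.succ - t₀
            have h2 : t₀ < e l.succ := hmono (by
              show (0 : Fin _) < l.succ
              simp [Fin.lt_iff_val_lt_val])
            omega
        · -- nothing in L' is counted
          have hL'0 : cnt K (L'.map Prod.snd) = 0 := by
            apply List.countP_eq_zero.2
            intro a ha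
            have hkey := List.rel_of_pairwise_cons (by rwa [List.map_cons] at hsortL) ha
            have hgt := key_gt_of_not hKd hp
            have hkey' : key d i₀ ≤ key d a := hkey
            simp only [decide_eq_true_eq]
            exact not_of_key_gt (by omega)
          constructor
          · intro _
            have h0 : cnt K (((w₀, i₀) :: L').map Prod.snd) = 0 := by
              rw [hLK, if_neg hp, hL'0]
            have hq : cnt K js = 0 := hmain.1 h0
            have hle : cnt K (js.drop t₀) ≤ cnt K js :=
              (List.drop_sublist _ _).countP_le
            rw [← hdropjs]
            omega
          · intro l hl
            rw [hL'0] at hl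
            omega


lemma seg_lt {bs : List (Blk c d)} {t : ℕ} (ht : t < bs.length) :
    seg bs t = (bs.get ⟨t, ht⟩).1 := by
  unfold seg
  rw [List.getD_eq_getElem _ _ ht]
  rfl

end OIAux


open OIAux in
/-- **Preimage of the monomials of a principal monomial OI-submodule**
(Proposition 3.4).  For a standard word
`w = w_1 τ_{i_1} w_2 τ_{i_2} ⋯ w_m τ_{i_m} ∈ 𝓛_std^(m)`, the preimage under `μ` of the
set of monomials of the OI-submodule `⟨μ(w)⟩` is
`𝓛̄_{i_1} 𝓝_{w_1} τ_{i_1} 𝓛̄_{i_2} 𝓝_{w_2} τ_{i_2} ⋯ 𝓛̄_{i_m} 𝓝_{w_m} τ_{i_m} 𝓛̄_0 ∩ 𝓛_std`. -/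
theorem preimage_of_monomials_of_principal_submodule
    (c d : ℕ) (hc : 1 ≤ c) (m : ℕ)
    (ws : Fin m → List (Letter c d)) (idx : Fin m → Fin (d + 1))
    (hsimple : ∀ j, SimpleWord (ws j)) (hstd : ∀ j, Standard (ws j))
    (w : List (Letter c d))
    (hw : w = (List.ofFn fun j : Fin m => ws j ++ [Letter.tau (idx j)]).flatten)
    (hwL : w ∈ LStd c d) (hwm : tauCount w = m) :
    {v : List (Letter c d) | v ∈ LStd c d ∧ OIDiv m (tauCount v) (eta w) (eta v)}
      = {v | v ∈
          (((List.finRange m).map fun j : Fin m =>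
              LLbar c d (idx j) * NW (ws j) *
                ({[Letter.tau (idx j)]} : Language (Letter c d))).prod
            * LLbar c d 0)
          ∧ v ∈ LStd c d} := by
  classical
  set L : List (List (Letter c d) × Fin (d + 1)) := List.ofFn (fun j => (ws j, idx j)) with hL
  have hLm : L.length = m := by rw [hL, List.length_ofFn]
  have hSimpL : Simp L := by
    intro b hb
    rw [hL, List.mem_ofFn] at hb
    obtain ⟨j, hj⟩ := hb
    rw [← hj]
    exact hsimple j
  have hwasm : w = asm L := by
    rw [hw, hL, asm, List.map_ofFn]
    rfl
  obtain ⟨bsw, hbsw, hsimpw, hsortw, hoccw⟩ := shape_of_LFull hwL.1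
  have hbswL : bsw = L := asm_inj hsimpw hSimpL (by rw [← hbsw, ← hwasm])
  rw [hbswL] at hsortw hoccw
  have hbig : patLang L = (((List.finRange m).map fun j : Fin m =>
      LLbar c d (idx j) * NW (ws j) * ({[Letter.tau (idx j)]} : Language (Letter c d))).prod
      * LLbar c d 0) := by
    rw [patLang, hL, List.map_ofFn, List.ofFn_eq_map]
    rfl
  ext v
  simp only [Set.mem_setOf_eq]
  constructor
  · rintro ⟨hvstd, hdivOI⟩
    refine ⟨?_, hvstd⟩
    rw [← hbig]
    obtain ⟨bs, hbs, hsimpb, hsortb, -⟩ := shape_of_LFull hvstd.1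
    obtain ⟨e, hmono, hbd, hpos, hdd⟩ := hdivOI
    have htc : tauCount v = bs.length := by rw [hbs]; exact tauCount_asm hsimpb
    apply mem_patLang_iff.2
    refine ⟨bs, hbs, hsimpb, ?_⟩
    apply e_to_matL L bs hsortw hsortb (fun l => e (Fin.cast hLm l))
    · intro a b hab
      apply hmono
      rw [Fin.lt_def, Fin.coe_cast, Fin.coe_cast]
      exact hab
    · intro l
      have h := hbd (Fin.cast hLm l)
      rw [htc] at h
      exact h
    · intro l pt
      obtain ⟨i, t⟩ := pt
      have hsimpl : SimpleWord (L.get l).1 := hSimpL _ (L.get_mem _)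
      show (eta (L.get l).1).1 (i, t) ≤ (eta (seg bs (e (Fin.cast hLm l) - 1))).1 (i, t)
      cases t with
      | zero =>
        have h := hdd i (Fin.cast hLm l)
        rw [hwasm, eta_asm_fst hSimpL, hbs, eta_asm_fst hsimpb] at h
        have hsegL : seg L ((Fin.cast hLm l : Fin m) : ℕ) = (L.get l).1 := by
          rw [seg_lt (t := ((Fin.cast hLm l : Fin m) : ℕ)) (by rw [Fin.coe_cast]; exact l.isLt)]
          congr 1
        rw [hsegL] at h
        have h0 : (eta (seg bs (e (Fin.cast hLm l) - 1))).1 (i, 0) =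
            (eta (seg bs (e (Fin.cast hLm l) - 1))).1 (i, 0) := rfl
        exact h
      | succ t =>
        rw [eta_simple_high hsimpl]
        exact Nat.zero_le _
    · intro K hK1 hKd
      have hK' : K - 1 < d := by omega
      have hKk : ((⟨K - 1, hK'⟩ : Fin d) : ℕ) + 1 = K := by simp; omega
      obtain ⟨k', hk'1, hk'2⟩ := hpos ⟨K - 1, hK'⟩
      have hw2 : (eta w).2 ⟨K - 1, hK'⟩ = cnt K (L.map Prod.snd) := by
        rw [hwasm, eta_asm_snd hSimpL]
        rw [hKk]
      have hv2 : (eta v).2 ⟨K - 1, hK'⟩ = cnt K (bs.map Prod.snd) := by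
        rw [hbs, eta_asm_snd hsimpb]
        rw [hKk]
      constructor
      · intro h0
        rw [hw2, h0] at hk'1
        omega
      · intro l hl
        have hval : (l : ℕ) = (k' : ℕ) := by
          rw [hw2] at hk'1
          omega
        have hcast : Fin.cast hLm l = k' := Fin.ext (by rw [Fin.coe_cast]; exact hval)
        show cnt K (bs.map Prod.snd) = e (Fin.cast hLm l)
        rw [hcast, ← hv2]
        exact hk'2
  · rintro ⟨hvbig, hvstd⟩
    refine ⟨hvstd, ?_⟩
    rw [← hbig] at hvbig
    obtain ⟨bs, hbs, hsimpb, hmat⟩ := mem_patLang_iff.1 hvbig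
    obtain ⟨e, hmono, hbd, hdd, hcnt⟩ := matL_to_e hmat hsortw
    have htc : tauCount v = bs.length := by rw [hbs]; exact tauCount_asm hsimpb
    refine ⟨fun k => e (Fin.cast hLm.symm k), ?_, ?_, ?_, ?_⟩
    · intro a b hab
      apply hmono
      rw [Fin.lt_def, Fin.coe_cast, Fin.coe_cast]
      exact hab
    · intro k
      rw [htc]
      exact hbd _
    · intro k
      have hKd : (k : ℕ) + 1 ≤ d := k.isLt
      have hKk : ((k : ℕ) + 1) - 1 = (k : ℕ) := by omega
      have hw2 : (eta w).2 k = cnt ((k : ℕ) + 1) (L.map Prod.snd) := by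
        rw [hwasm, eta_asm_snd hSimpL]
      have hv2 : (eta v).2 k = cnt ((k : ℕ) + 1) (bs.map Prod.snd) := by
        rw [hbs, eta_asm_snd hsimpb]
      obtain ⟨j, hjmem, hjval⟩ := hoccw ((k : ℕ) + 1) (by omega) hKd
      have hpos1 : 1 ≤ cnt ((k : ℕ) + 1) (L.map Prod.snd) :=
        cnt_pos_of_mem hjmem (by omega) (by omega)
      have hle : cnt ((k : ℕ) + 1) (L.map Prod.snd) ≤ m := by
        have h := cnt_le_length (K := (k : ℕ) + 1) (L.map Prod.snd)
        rw [List.length_map, hLm] at h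
        exact h
      have hltL : cnt ((k : ℕ) + 1) (L.map Prod.snd) - 1 < L.length := by
        rw [hLm]; omega
      refine ⟨⟨cnt ((k : ℕ) + 1) (L.map Prod.snd) - 1, by omega⟩, ?_, ?_⟩
      · rw [hw2]
        show cnt ((k : ℕ) + 1) (L.map Prod.snd) - 1 + 1 = _
        omega
      · rw [hv2]
        have h := (hcnt ((k : ℕ) + 1) hKd).2 ⟨cnt ((k : ℕ) + 1) (L.map Prod.snd) - 1, hltL⟩
          (by
            show cnt ((k : ℕ) + 1) (L.map Prod.snd) - 1 + 1 = _
            omega)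
        rw [h]
        congr 1
    · intro i lf
      have h := hdd (Fin.cast hLm.symm lf) (i, 0)
      have hsegL : seg L ((lf : Fin m) : ℕ) = (L.get (Fin.cast hLm.symm lf)).1 := by
        rw [seg_lt (t := ((lf : Fin m) : ℕ)) (by rw [hLm]; exact lf.isLt)]
        congr 1
      rw [hwasm, eta_asm_fst hSimpL, hbs, eta_asm_fst hsimpb, hsegL]
      exact h


end
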